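/- Let ψ ∈ H_A ⊗ H_B be a unit vector, A a self-adjoint operator on H_A with ‖A‖ ≤ 1, and ⟨ψ, (A ⊗ I)ψ⟩ ≥ 1 − ε for some ε ≥ 0. If ψ = φ + φ' with φ and φ' obtained by projecting each Schmidt term of ψ onto two orthogonal invariant summands (so φ = Σᵢ αᵢλᵢ vᵢ ⊗ wᵢ with αᵢ ∈ [0,1]), then ⟨φ, (A ⊗ I)φ⟩ ≥ ‖φ‖² − ε. -/

import Mathlib

open Kronecker

/-- Action of a matrix on a Euclidean-space vector. -/
noncomputable def act {ι κ : Type*} [Fintype ι] (M : Matrix κ ι ℂ) (x : EuclideanSpace ℂ ι) :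
    EuclideanSpace ℂ κ := WithLp.toLp 2 (fun k => ∑ j, M k j * x j)

/-- Elementary tensor of two Euclidean-space vectors. -/
noncomputable def tp {ι κ : Type*} (v : EuclideanSpace ℂ ι) (w : EuclideanSpace ℂ κ) :
    EuclideanSpace ℂ (ι × κ) := WithLp.toLp 2 (fun p : ι × κ => v p.1 * w p.2)

lemma inner_tp {ι κ : Type*} [Fintype ι] [Fintype κ]
    (a c : EuclideanSpace ℂ ι) (b d : EuclideanSpace ℂ κ) :
    (inner ℂ (tp a b) (tp c d) : ℂ) = inner ℂ a c * inner ℂ b d := by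
  simp only [PiLp.inner_apply, RCLike.inner_apply, tp, Fintype.sum_prod_type, map_mul]
  rw [Finset.sum_mul_sum]
  exact Finset.sum_congr rfl fun i _ => Finset.sum_congr rfl fun k _ => by ring

lemma act_kron {m n : ℕ} (A : Matrix (Fin m) (Fin m) ℂ) (x : EuclideanSpace ℂ (Fin m))
    (y : EuclideanSpace ℂ (Fin n)) :
    act (A ⊗ₖ (1 : Matrix (Fin n) (Fin n) ℂ)) (tp x y) = tp (act A x) y := by
  ext p
  simp only [act, tp, Matrix.kroneckerMap_apply, Fintype.sum_prod_type, Matrix.one_apply,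
    mul_ite, mul_one, mul_zero, ite_mul, zero_mul, Finset.sum_ite_eq, Finset.mem_univ, if_true,
    Finset.sum_mul]
  exact Finset.sum_congr rfl fun j _ => by ring

lemma act_sum {ι κ β : Type*} [Fintype ι] [Fintype β] (M : Matrix κ ι ℂ) (c : β → ℂ)
    (y : β → EuclideanSpace ℂ ι) :
    act M (∑ i, c i • y i) = ∑ i, c i • act M (y i) := by
  ext k
  simp only [act]
  simp only [WithLp.ofLp_sum, WithLp.ofLp_smul, WithLp.ofLp_toLp, Finset.sum_apply, Pi.smul_apply]
  simp only [PiLp.smul_apply, smul_eq_mul, act, Finset.mul_sum]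
  rw [Finset.sum_comm]
  exact Finset.sum_congr rfl fun i _ => Finset.sum_congr rfl fun j _ => by ring

lemma key {m n : ℕ} (A : Matrix (Fin m) (Fin m) ℂ) {ι : Type*} [Fintype ι]
    (c : ι → ℂ) (v : ι → EuclideanSpace ℂ (Fin m)) (w : ι → EuclideanSpace ℂ (Fin n))
    (hw : Orthonormal ℂ w) :
    (inner ℂ (∑ i, c i • tp (v i) (w i))
        (act (A ⊗ₖ (1 : Matrix (Fin n) (Fin n) ℂ)) (∑ i, c i • tp (v i) (w i))) : ℂ)
      = ∑ i, (starRingEnd ℂ) (c i) * c i * inner ℂ (v i) (act A (v i)) := by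
  classical
  rw [act_sum, sum_inner]
  rw [orthonormal_iff_ite] at hw
  refine Finset.sum_congr rfl fun i _ => ?_
  rw [inner_sum]
  simp only [inner_smul_left, inner_smul_right, act_kron, inner_tp, hw,
    mul_ite, mul_one, mul_zero, Finset.sum_ite_eq, Finset.mem_univ, if_true]
  ring

lemma act_one {ι : Type*} [Fintype ι] [DecidableEq ι] (x : EuclideanSpace ℂ ι) :
    act (1 : Matrix ι ι ℂ) x = x := by
  ext k
  simp [act, Matrix.one_apply, ite_mul]

lemma norm_sq_eq {m n : ℕ} {ι : Type*} [Fintype ι]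
    (c : ι → ℂ) (v : ι → EuclideanSpace ℂ (Fin m)) (w : ι → EuclideanSpace ℂ (Fin n))
    (hv : Orthonormal ℂ v) (hw : Orthonormal ℂ w)
    (x : EuclideanSpace ℂ (Fin m × Fin n)) (hx : x = ∑ i, c i • tp (v i) (w i)) :
    (‖x‖ : ℝ) ^ 2 = ∑ i, Complex.normSq (c i) := by
  classical
  have h1 : (inner ℂ x x : ℂ) = ∑ i, (starRingEnd ℂ) (c i) * c i * inner ℂ (v i) (v i) := by
    have := key (1 : Matrix (Fin m) (Fin m) ℂ) c v w hw
    rw [Matrix.one_kronecker_one, act_one] at this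
    simp only [act_one] at this
    rw [hx]; exact this
  rw [orthonormal_iff_ite] at hv
  simp only [hv, if_pos rfl, mul_one] at h1
  have h2 : (‖x‖ : ℝ) ^ 2 = (inner ℂ x x : ℂ).re := by
    rw [← @inner_self_eq_norm_sq ℂ, RCLike.re_to_complex]
  rw [h2, h1, Complex.re_sum]
  refine Finset.sum_congr rfl fun i _ => ?_
  simp [Complex.normSq_apply]

/-- let `ψ = ∑ᵢ λᵢ vᵢ ⊗ wᵢ` be a unit vector (Schmidt decomposition, `λᵢ > 0`,
`v`, `w` orthonormal), `A` self-adjoint with `‖A‖ ≤ 1`, and `⟨ψ, (A ⊗ I)ψ⟩ ≥ 1 − ε`.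
If `φ = ∑ᵢ αᵢλᵢ vᵢ ⊗ wᵢ` with `αᵢ ∈ [0,1]` (the projection of `ψ` onto an invariant
summand), then `⟨φ, (A ⊗ I)φ⟩ ≥ ‖φ‖² − ε`. -/
theorem stmt12 {m n : ℕ} (ε : ℝ) (hε : 0 ≤ ε)
    (A : Matrix (Fin m) (Fin m) ℂ) (hA : A.IsHermitian)
    (hAnorm : ∀ x : EuclideanSpace ℂ (Fin m), ‖act A x‖ ≤ ‖x‖)
    {ι : Type*} [Fintype ι] (lam : ι → ℝ) (hlam : ∀ i, 0 < lam i)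
    (v : ι → EuclideanSpace ℂ (Fin m)) (w : ι → EuclideanSpace ℂ (Fin n))
    (hv : Orthonormal ℂ v) (hw : Orthonormal ℂ w)
    (ψ : EuclideanSpace ℂ (Fin m × Fin n))
    (hψ : ψ = ∑ i, (lam i : ℂ) • tp (v i) (w i))
    (hunit : ‖ψ‖ = 1)
    (h : 1 - ε ≤ (inner ℂ ψ (act (A ⊗ₖ (1 : Matrix (Fin n) (Fin n) ℂ)) ψ) : ℂ).re)
    (α : ι → ℝ) (hα0 : ∀ i, 0 ≤ α i) (hα1 : ∀ i, α i ≤ 1)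
    (φ : EuclideanSpace ℂ (Fin m × Fin n))
    (hφ : φ = ∑ i, ((α i : ℂ) * (lam i : ℂ)) • tp (v i) (w i)) :
    ‖φ‖ ^ 2 - ε ≤ (inner ℂ φ (act (A ⊗ₖ (1 : Matrix (Fin n) (Fin n) ℂ)) φ) : ℂ).re := by
  set a : ι → ℝ := fun i => (inner ℂ (v i) (act A (v i)) : ℂ).re with ha
  -- a i ≤ 1
  have ha1 : ∀ i, a i ≤ 1 := by
    intro i
    have h1 : ‖(inner ℂ (v i) (act A (v i)) : ℂ)‖ ≤ ‖v i‖ * ‖act A (v i)‖ := norm_inner_le_norm _ _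
    have h2 : ‖v i‖ = 1 := hv.1 i
    have h3 : ‖act A (v i)‖ ≤ 1 := by simpa [h2] using hAnorm (v i)
    have h4 : ‖(inner ℂ (v i) (act A (v i)) : ℂ)‖ ≤ 1 := by
      calc ‖(inner ℂ (v i) (act A (v i)) : ℂ)‖ ≤ ‖v i‖ * ‖act A (v i)‖ := h1
        _ ≤ 1 := by rw [h2, one_mul]; exact h3
    have h5 := Complex.abs_re_le_norm (inner ℂ (v i) (act A (v i)) : ℂ)
    have : |a i| ≤ 1 := le_trans h5 h4
    exact le_trans (le_abs_self _) this
  -- expand the two quadratic forms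
  have hψq : (inner ℂ ψ (act (A ⊗ₖ (1 : Matrix (Fin n) (Fin n) ℂ)) ψ) : ℂ).re
      = ∑ i, lam i ^ 2 * a i := by
    rw [hψ, key A _ v w hw, Complex.re_sum]
    refine Finset.sum_congr rfl fun i _ => ?_
    rw [Complex.conj_ofReal, ← Complex.ofReal_mul, Complex.re_ofReal_mul]
    simp only [ha]; ring
  have hφq : (inner ℂ φ (act (A ⊗ₖ (1 : Matrix (Fin n) (Fin n) ℂ)) φ) : ℂ).re
      = ∑ i, (α i * lam i) ^ 2 * a i := by
    rw [hφ, key A _ v w hw, Complex.re_sum]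
    refine Finset.sum_congr rfl fun i _ => ?_
    rw [map_mul, Complex.conj_ofReal, Complex.conj_ofReal]
    have : ((α i : ℂ)) * (lam i : ℂ) * ((α i : ℂ) * (lam i : ℂ)) * (inner ℂ (v i) (act A (v i)) : ℂ)
        = ((((α i * lam i) ^ 2 : ℝ)) : ℂ) * (inner ℂ (v i) (act A (v i)) : ℂ) := by
      push_cast; ring
    rw [this, Complex.re_ofReal_mul]
  have hψn : ∑ i, lam i ^ 2 = 1 := by
    have hh := norm_sq_eq (fun i => ((lam i : ℂ))) v w hv hw ψ hψ
    rw [hunit] at hh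
    simp only [Complex.normSq_ofReal, one_pow] at hh
    rw [show (∑ i, lam i ^ 2) = ∑ i, lam i * lam i from
      Finset.sum_congr rfl fun i _ => by ring, ← hh]
  have hφn : ‖φ‖ ^ 2 = ∑ i, (α i * lam i) ^ 2 := by
    have := norm_sq_eq (fun i => ((α i : ℂ) * (lam i : ℂ))) v w hv hw φ hφ
    rw [this]
    refine Finset.sum_congr rfl fun i _ => ?_
    simp only [Complex.normSq_mul, Complex.normSq_ofReal]; ring
  rw [hφq, hφn]
  -- Σ λ²(1−a) ≤ ε
  have hsum : ∑ i, lam i ^ 2 * (1 - a i) ≤ ε := by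
    have : ∑ i, lam i ^ 2 * (1 - a i) = ∑ i, lam i ^ 2 - ∑ i, lam i ^ 2 * a i := by
      rw [← Finset.sum_sub_distrib]
      exact Finset.sum_congr rfl fun i _ => by ring
    rw [this, hψn]
    rw [hψq] at h
    linarith
  have hterm : ∀ i ∈ Finset.univ, (α i * lam i) ^ 2 * (1 - a i) ≤ lam i ^ 2 * (1 - a i) := by
    intro i _
    have h1 : 0 ≤ 1 - a i := by linarith [ha1 i]
    have hle : α i * lam i ≤ lam i := mul_le_of_le_one_left (hlam i).le (hα1 i)
    have hpos : 0 ≤ α i * lam i := mul_nonneg (hα0 i) (hlam i).le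
    exact mul_le_mul_of_nonneg_right (pow_le_pow_left₀ hpos hle 2) h1
  have h2 : ∑ i, (α i * lam i) ^ 2 * (1 - a i) ≤ ε :=
    le_trans (Finset.sum_le_sum hterm) hsum
  have h3 : ∑ i, (α i * lam i) ^ 2 * (1 - a i)
      = ∑ i, (α i * lam i) ^ 2 - ∑ i, (α i * lam i) ^ 2 * a i := by
    rw [← Finset.sum_sub_distrib]
    exact Finset.sum_congr rfl fun i _ => by ring
  linarith [h3 ▸ h2]
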